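/- Let α > 0, m ∈ ℝ, n ≥ 0, and let f : [0,∞) → ℝ be differentiable with f'(t) ≥ -α·f(t) + m - n·exp(-α·t) for all t ≥ 0. Then for all t ≥ 0: f(t) ≥ f(0)·exp(-α·t) + (m/α)·(1 - exp(-α·t)) - n·t·exp(-α·t), and consequently f(t) ≥ f(0)·exp(-α·t) + (m/α)·(1 - exp(-α·t)) - n/(α·e), where e is Euler's number. -/

import Mathlib

theorem comparison_resonant_case
    (α m n : ℝ) (hα : 0 < α) (hn : 0 ≤ n)
    (f f' : ℝ → ℝ)
    (hderiv : ∀ t : ℝ, 0 ≤ t → HasDerivAt f (f' t) t)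
    (hineq : ∀ t : ℝ, 0 ≤ t → f' t ≥ -α * f t + m - n * Real.exp (-α * t)) :
    ∀ t : ℝ, 0 ≤ t →
      (f t ≥ f 0 * Real.exp (-α * t) + (m / α) * (1 - Real.exp (-α * t))
            - n * t * Real.exp (-α * t)) ∧
      (f t ≥ f 0 * Real.exp (-α * t) + (m / α) * (1 - Real.exp (-α * t))
            - n / (α * Real.exp 1)) := by
  intro t ht
  set g : ℝ → ℝ := fun s => f s * Real.exp (α * s) - (m / α) * (Real.exp (α * s) - 1) + n * s
    with hg
  set g' : ℝ → ℝ := fun s =>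
    f' s * Real.exp (α * s) + f s * (α * Real.exp (α * s)) - (m / α) * (α * Real.exp (α * s)) + n
    with hg'
  have hgd : ∀ s ∈ Set.Ici (0:ℝ), HasDerivAt g (g' s) s := by
    intro s hs
    have he : HasDerivAt (fun s : ℝ => Real.exp (α * s)) (α * Real.exp (α * s)) s := by
      have := (Real.hasDerivAt_exp (α * s)).comp s ((hasDerivAt_id s).const_mul α)
      simpa [mul_comm, Function.comp_def] using this
    have h1 := (hderiv s hs).mul he
    have h2 := (he.sub_const 1).const_mul (m / α)
    have h3 := (hasDerivAt_id s).const_mul n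
    simpa [hg, hg', mul_comm, Pi.add_def, Pi.sub_def, Pi.mul_def] using (h1.sub h2).add h3
  have hg'0 : ∀ s ∈ Set.Ici (0:ℝ), 0 ≤ g' s := by
    intro s hs
    have h := hineq s hs
    have hepos : 0 < Real.exp (α * s) := Real.exp_pos _
    have hee : Real.exp (-α * s) * Real.exp (α * s) = 1 := by
      rw [← Real.exp_add]; ring_nf; exact Real.exp_zero
    have := mul_le_mul_of_nonneg_right h hepos.le
    simp only [hg']
    have hm : m / α * (α * Real.exp (α * s)) = m * Real.exp (α * s) := by
      field_simp
    have hrw1 : (-α * f s + m - n * Real.exp (-α * s)) * Real.exp (α * s)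
        = -α * f s * Real.exp (α * s) + m * Real.exp (α * s) - n := by
      linear_combination (-n) * hee
    nlinarith [this, hrw1, hm]
  have hmono : MonotoneOn g (Set.Ici (0:ℝ)) := by
    apply monotoneOn_of_hasDerivWithinAt_nonneg (convex_Ici 0)
      (fun s hs => (hgd s hs).continuousAt.continuousWithinAt)
      (fun s hs => (hgd s (interior_subset hs)).hasDerivWithinAt)
      (fun s hs => hg'0 s (interior_subset hs))
  have hkey : g 0 ≤ g t := hmono (Set.self_mem_Ici) ht ht
  have h0 : g 0 = f 0 := by simp [hg]
  have hepos : (0:ℝ) < Real.exp (α * t) := Real.exp_pos _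
  have hee : Real.exp (-α * t) * Real.exp (α * t) = 1 := by
    rw [← Real.exp_add]; ring_nf; exact Real.exp_zero
  have hbound : f t ≥ f 0 * Real.exp (-α * t) + (m / α) * (1 - Real.exp (-α * t))
      - n * t * Real.exp (-α * t) := by
    have h := hkey
    rw [h0] at h
    simp only [hg] at h
    have h2 := mul_le_mul_of_nonneg_right h (Real.exp_pos (-α * t)).le
    have hrw : (f t * Real.exp (α * t) - m / α * (Real.exp (α * t) - 1) + n * t)
        * Real.exp (-α * t)
        = f t - m / α * (1 - Real.exp (-α * t)) + n * t * Real.exp (-α * t) := by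
      linear_combination (f t - m / α) * hee
    rw [hrw] at h2
    linarith
  have htexp : n / (α * Real.exp 1) ≥ n * t * Real.exp (-α * t) := by
    have h1 : α * t ≤ Real.exp (α * t - 1) := by
      have := Real.add_one_le_exp (α * t - 1)
      linarith
    have h2 : Real.exp (α * t - 1) = Real.exp (α * t) / Real.exp 1 := by
      rw [Real.exp_sub]
    have hE : (0:ℝ) < Real.exp 1 := Real.exp_pos 1
    have h3 : α * t * Real.exp (-α * t) ≤ 1 / Real.exp 1 := by
      have h4 := mul_le_mul_of_nonneg_right h1 (Real.exp_pos (-α * t)).le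
      rw [h2] at h4
      calc α * t * Real.exp (-α * t) ≤ Real.exp (α * t) / Real.exp 1 * Real.exp (-α * t) := h4
        _ = 1 / Real.exp 1 := by
            rw [div_mul_eq_mul_div, mul_comm, hee]
    have h5 := mul_le_mul_of_nonneg_left h3 (div_nonneg hn hα.le : 0 ≤ n / α)
    have hα' : α ≠ 0 := hα.ne'
    calc n * t * Real.exp (-α * t) = n / α * (α * t * Real.exp (-α * t)) := by
          field_simp
      _ ≤ n / α * (1 / Real.exp 1) := h5
      _ = n / (α * Real.exp 1) := by field_simp
  exact ⟨hbound, le_trans (by linarith) hbound⟩
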